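/- Let s: (0,∞) → ℝ^n be s(τ)_i = e^{τ z_i}/∑_j e^{τ z_j} for a fixed z ∈ ℝ^n with not all entries equal. Then the Shannon entropy H(τ) = −∑_i s(τ)_i log s(τ)_i is strictly decreasing in τ on (0, ∞). -/

import Mathlib

noncomputable def softmax {n : ℕ} (z : Fin n → ℝ) (i : Fin n) : ℝ :=
  Real.exp (z i) / ∑ j, Real.exp (z j)

noncomputable def Zsum {n : ℕ} (z : Fin n → ℝ) (τ : ℝ) : ℝ := ∑ j, Real.exp (τ * z j)
noncomputable def Asum {n : ℕ} (z : Fin n → ℝ) (τ : ℝ) : ℝ := ∑ j, z j * Real.exp (τ * z j)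
noncomputable def Bsum {n : ℕ} (z : Fin n → ℝ) (τ : ℝ) : ℝ := ∑ j, (z j)^2 * Real.exp (τ * z j)

lemma hasDerivAt_Zsum {n : ℕ} (z : Fin n → ℝ) (τ : ℝ) :
    HasDerivAt (Zsum z) (Asum z τ) τ := by
  unfold Zsum Asum
  apply HasDerivAt.fun_sum
  intro j _
  have h := (HasDerivAt.exp ((hasDerivAt_id τ).mul_const (z j)))
  simpa [mul_comm] using h

lemma hasDerivAt_Asum {n : ℕ} (z : Fin n → ℝ) (τ : ℝ) :
    HasDerivAt (Asum z) (Bsum z τ) τ := by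
  unfold Asum Bsum
  apply HasDerivAt.fun_sum
  intro j _
  have h := (HasDerivAt.exp ((hasDerivAt_id τ).mul_const (z j))).const_mul (z j)
  simp only [id_eq] at h
  refine h.congr_deriv ?_
  ring

lemma var_pos {n : ℕ} (z : Fin n → ℝ) (τ : ℝ) (i0 j0 : Fin n) (h : z i0 ≠ z j0) :
    0 < Bsum z τ * Zsum z τ - (Asum z τ)^2 := by
  set w : Fin n → ℝ := fun j => Real.exp (τ * z j) with hw
  have hwpos : ∀ j, 0 < w j := fun j => Real.exp_pos _
  have hBZ : Bsum z τ * Zsum z τ = ∑ i, ∑ j, (z i)^2 * w i * w j := by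
    unfold Bsum Zsum; rw [Finset.sum_mul_sum]
  have hBZ' : Bsum z τ * Zsum z τ = ∑ i, ∑ j, (z j)^2 * w j * w i :=
    hBZ.trans Finset.sum_comm
  have hAA : (Asum z τ)^2 = ∑ i, ∑ j, (z i * w i) * (z j * w j) := by
    unfold Asum; rw [sq, Finset.sum_mul_sum]
  have key : ∑ i, ∑ j, w i * w j * (z i - z j)^2
      = 2 * (Bsum z τ * Zsum z τ - (Asum z τ)^2) := by
    have hsplit : 2 * (Bsum z τ * Zsum z τ - (Asum z τ)^2)
        = (∑ i, ∑ j, (z i)^2 * w i * w j) + (∑ i, ∑ j, (z j)^2 * w j * w i)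
          - 2 * ∑ i, ∑ j, (z i * w i) * (z j * w j) := by
      rw [← hBZ, ← hBZ', ← hAA]; ring
    rw [hsplit, Finset.mul_sum, ← Finset.sum_add_distrib, ← Finset.sum_sub_distrib]
    apply Finset.sum_congr rfl; intro i _
    rw [Finset.mul_sum, ← Finset.sum_add_distrib, ← Finset.sum_sub_distrib]
    apply Finset.sum_congr rfl; intro j _; ring
  have hpos : 0 < ∑ i, ∑ j, w i * w j * (z i - z j)^2 := by
    apply Finset.sum_pos'
    · intro i _
      apply Finset.sum_nonneg
      intro j _
      positivity
    · refine ⟨i0, Finset.mem_univ _, ?_⟩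
      apply Finset.sum_pos'
      · intro j _; positivity
      · refine ⟨j0, Finset.mem_univ _, ?_⟩
        have : z i0 - z j0 ≠ 0 := sub_ne_zero_of_ne h
        positivity
  linarith [key ▸ hpos]

theorem stmt10 {n : ℕ} (z : Fin n → ℝ) (hz : ∃ i j, z i ≠ z j) :
    StrictAntiOn
      (fun τ : ℝ =>
        -∑ i, softmax (fun j => τ * z j) i * Real.log (softmax (fun j => τ * z j) i))
      (Set.Ioi 0) := by
  obtain ⟨i0, j0, hij⟩ := hz
  have hZpos : ∀ τ, 0 < Zsum z τ :=
    fun τ => Finset.sum_pos (fun j _ => Real.exp_pos _) ⟨i0, Finset.mem_univ _⟩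
  have heq : (fun τ : ℝ =>
        -∑ i, softmax (fun j => τ * z j) i * Real.log (softmax (fun j => τ * z j) i))
      = fun τ => Real.log (Zsum z τ) - τ * Asum z τ / Zsum z τ := by
    funext τ
    have hZ0 : Zsum z τ ≠ 0 := (hZpos τ).ne'
    have hterm : ∀ i : Fin n,
        softmax (fun j => τ * z j) i * Real.log (softmax (fun j => τ * z j) i)
        = (τ * (z i * Real.exp (τ * z i)) - Real.log (Zsum z τ) * Real.exp (τ * z i))
            / Zsum z τ := by
      intro i
      unfold softmax Zsum
      rw [Real.log_div (Real.exp_ne_zero _) (by simpa [Zsum] using hZ0), Real.log_exp]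
      field_simp
    rw [Finset.sum_congr rfl (fun i _ => hterm i), ← Finset.sum_div,
      Finset.sum_sub_distrib, ← Finset.mul_sum, ← Finset.mul_sum]
    show -((τ * Asum z τ - Real.log (Zsum z τ) * Zsum z τ) / Zsum z τ) = _
    field_simp
    ring
  rw [heq]
  have hH : ∀ τ : ℝ, HasDerivAt (fun t => Real.log (Zsum z t) - t * Asum z t / Zsum z t)
      (-τ * ((Bsum z τ * Zsum z τ - (Asum z τ)^2) / (Zsum z τ)^2)) τ := by
    intro τ
    have hZ0 : Zsum z τ ≠ 0 := (hZpos τ).ne'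
    have h1 : HasDerivAt (fun t => Real.log (Zsum z t)) (Asum z τ / Zsum z τ) τ :=
      (hasDerivAt_Zsum z τ).log hZ0
    have h2 : HasDerivAt (fun t : ℝ => t * Asum z t)
        (1 * Asum z τ + τ * Bsum z τ) τ :=
      (hasDerivAt_id τ).mul (hasDerivAt_Asum z τ)
    have h3 : HasDerivAt (fun t : ℝ => t * Asum z t / Zsum z t)
        (((1 * Asum z τ + τ * Bsum z τ) * Zsum z τ - (τ * Asum z τ) * Asum z τ)
          / (Zsum z τ)^2) τ := h2.div (hasDerivAt_Zsum z τ) hZ0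
    refine (h1.sub h3).congr_deriv ?_
    field_simp
    ring
  apply StrictAntiOn.mono ?_ (le_refl (Set.Ioi 0))
  apply strictAntiOn_of_deriv_neg (convex_Ioi 0)
  · exact fun x _ => ((hH x).continuousAt).continuousWithinAt
  · intro x hx
    rw [interior_Ioi] at hx
    rw [(hH x).deriv]
    have hvar := var_pos z x i0 j0 hij
    have hZsq : 0 < (Zsum z x)^2 := pow_pos (hZpos x) 2
    have : 0 < x := hx
    have hfrac : 0 < (Bsum z x * Zsum z x - (Asum z x)^2) / (Zsum z x)^2 :=
      div_pos hvar hZsq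
    nlinarith
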